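/- Suppose the digraph of W is weakly connected and there exists a leader k0 such that its closed strong component C(k0) admits a gauge. Then for every nominal prescribed-time trajectory X with parameters ρ1, ρ2 > 0 and prescribed time T1 > 0, the following hold: (i) for every leader k and every gauge g for C(k), there exists c ∈ ℝ such that X t j = g j · c for all j ∈ C(k) and all t ≥ T1; (ii) for every leader k such that C(k) admits no gauge, X t j = 0 for all j ∈ C(k) and all t ≥ T1; (iii) for every follower l and all t ≥ T1, |X t l| ≤ max over leaders k of |X t k| (prescribed-time bipartite containment within the preassigned time T1). -/

import Mathlib

open Matrix

/-- Time-varying gain: `μ_T(t) = κ/(T − t)` for `0 ≤ t < T`, `0` otherwise. -/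
noncomputable def gain (κ T t : ℝ) : ℝ := if 0 ≤ t ∧ t < T then κ / (T - t) else 0

/-- Signed Laplacian `L = D − W` with `D k k = ∑_l |W k l|`. -/
noncomputable def sLap {N : ℕ} (W : Matrix (Fin N) (Fin N) ℝ) : Matrix (Fin N) (Fin N) ℝ :=
  Matrix.diagonal (fun k => ∑ l, |W k l|) - W

/-- Node `i` reaches node `j`: reflexive–transitive closure of the edge relation
`E i j ↔ W j i ≠ 0`. -/
def Reaches {N : ℕ} (W : Matrix (Fin N) (Fin N) ℝ) : Fin N → Fin N → Prop :=
  Relation.ReflTransGen (fun i j => W j i ≠ 0)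

def StronglyConnected {N : ℕ} (W : Matrix (Fin N) (Fin N) ℝ) : Prop :=
  ∀ i j, Reaches W i j

def QuasiStronglyConnected {N : ℕ} (W : Matrix (Fin N) (Fin N) ℝ) : Prop :=
  ∃ r, ∀ j, Reaches W r j

def WeaklyConnected {N : ℕ} (W : Matrix (Fin N) (Fin N) ℝ) : Prop :=
  ∀ i j, Relation.ReflTransGen (fun a b => W b a ≠ 0 ∨ W a b ≠ 0) i j

/-- `k` is a leader: every node reaching `k` is reached back by `k`. -/
def IsLeader {N : ℕ} (W : Matrix (Fin N) (Fin N) ℝ) (k : Fin N) : Prop :=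
  ∀ j, Reaches W j k → Reaches W k j

/-- Closed strong component of a leader `k`. -/
def CSC {N : ℕ} (W : Matrix (Fin N) (Fin N) ℝ) (k : Fin N) : Set (Fin N) :=
  {j | Reaches W j k ∧ Reaches W k j}

/-- A gauge for a node set `S`. -/
def IsGauge {N : ℕ} (W : Matrix (Fin N) (Fin N) ℝ) (S : Set (Fin N)) (g : Fin N → ℝ) : Prop :=
  (∀ k ∈ S, g k = 1 ∨ g k = -1) ∧ ∀ k ∈ S, ∀ l ∈ S, g k * W k l * g l = |W k l|

/-- Nominal prescribed-time trajectory of the protocol (4). -/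
def NominalTraj {N : ℕ} (W : Matrix (Fin N) (Fin N) ℝ) (κ ρ1 ρ2 T1 : ℝ)
    (X : ℝ → Fin N → ℝ) : Prop :=
  Continuous X ∧
  ∀ t : ℝ, 0 ≤ t → t ≠ T1 →
    HasDerivAt X ((-(ρ1 + ρ2 * gain κ T1 t)) • (sLap W).mulVec (X t)) t

section Graph
variable {N : ℕ} (W : Matrix (Fin N) (Fin N) ℝ)

lemma sLap_row {x : Fin N → ℝ} (hx : (sLap W).mulVec x = 0) (k : Fin N) :
    ∑ l, (|W k l| * x k - W k l * x l) = 0 := by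
  have h := congrFun hx k
  rw [sLap, Matrix.sub_mulVec] at h
  simp only [Pi.sub_apply, Matrix.mulVec_diagonal, Pi.zero_apply] at h
  simp only [Matrix.mulVec, dotProduct] at h
  rw [Finset.sum_sub_distrib, ← Finset.sum_mul]
  exact h

lemma prop_max {x : Fin N → ℝ} (hx : (sLap W).mulVec x = 0)
    {S : Set (Fin N)} (hS : ∀ j ∈ S, ∀ l, W j l ≠ 0 → l ∈ S)
    {M : ℝ} (hM : ∀ j ∈ S, |x j| ≤ M)
    {j : Fin N} (hjS : j ∈ S) (hj : |x j| = M) :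
    ∀ l, W j l ≠ 0 → |x l| = M ∧ W j l * x l = |W j l| * x j := by
  set s : ℝ := if 0 ≤ x j then 1 else -1 with hs
  have hs2 : s * x j = |x j| := by
    by_cases h : 0 ≤ x j
    · simp [hs, h, abs_of_nonneg h]
    · push_neg at h; simp [hs, not_le.2 h, abs_of_neg h]
  have hss : s * s = 1 := by by_cases h : 0 ≤ x j <;> simp [hs, h]
  have hsabs : |s| = 1 := by by_cases h : 0 ≤ x j <;> simp [hs, h]
  have hrow := sLap_row W hx j
  have hrow2 : ∑ l, (|W j l| * M - s * (W j l * x l)) = 0 := by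
    calc ∑ l, (|W j l| * M - s * (W j l * x l))
        = s * ∑ l, (|W j l| * x j - W j l * x l) := by
          rw [Finset.mul_sum]
          refine Finset.sum_congr rfl fun l _ => ?_
          rw [← hj, ← hs2]; ring
      _ = 0 := by rw [hrow, mul_zero]
  have hterm : ∀ l, s * (W j l * x l) ≤ |W j l| * M := by
    intro l
    by_cases hWl : W j l = 0
    · simp [hWl]
    · calc s * (W j l * x l) ≤ |s * (W j l * x l)| := le_abs_self _
        _ = |W j l| * |x l| := by rw [abs_mul, abs_mul, hsabs, one_mul]
        _ ≤ |W j l| * M := mul_le_mul_of_nonneg_left (hM l (hS j hjS l hWl)) (abs_nonneg _)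
  have hnn : ∀ l ∈ Finset.univ, (0:ℝ) ≤ |W j l| * M - s * (W j l * x l) :=
    fun l _ => sub_nonneg.2 (hterm l)
  have hzero := (Finset.sum_eq_zero_iff_of_nonneg hnn).1 hrow2
  intro l hWl
  have h0 := hzero l (Finset.mem_univ l)
  have heq : |W j l| * M = s * (W j l * x l) := by linarith [sub_eq_zero.1 h0]
  have habsW : 0 < |W j l| := abs_pos.2 hWl
  have h1 : |W j l| * M ≤ |W j l| * |x l| := by
    calc |W j l| * M = s * (W j l * x l) := heq
      _ ≤ |s * (W j l * x l)| := le_abs_self _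
      _ = |W j l| * |x l| := by rw [abs_mul, abs_mul, hsabs, one_mul]
  have hMl : M ≤ |x l| := le_of_mul_le_mul_left h1 habsW
  refine ⟨le_antisymm (hM l (hS j hjS l hWl)) hMl, ?_⟩
  have h2 : W j l * x l = s * (|W j l| * M) := by
    have := congrArg (fun z => s * z) heq
    calc W j l * x l = (s * s) * (W j l * x l) := by rw [hss, one_mul]
      _ = s * (s * (W j l * x l)) := by ring
      _ = s * (|W j l| * M) := by rw [← heq]
  rw [h2, ← hj, ← hs2]
  ring_nf
  linear_combination |W j l| * x j * hss

lemma reach_max {x : Fin N → ℝ} (hx : (sLap W).mulVec x = 0)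
    {S : Set (Fin N)} (hS : ∀ j ∈ S, ∀ l, W j l ≠ 0 → l ∈ S)
    {M : ℝ} (hM : ∀ j ∈ S, |x j| ≤ M)
    {m : Fin N} (hmS : m ∈ S) (hm : |x m| = M) :
    ∀ i, Reaches W i m → i ∈ S ∧ |x i| = M := by
  intro i hi
  induction hi using Relation.ReflTransGen.head_induction_on with
  | refl => exact ⟨hmS, hm⟩
  | head hab _ ih =>
    obtain ⟨hbS, hbM⟩ := ih
    exact ⟨hS _ hbS _ hab, (prop_max W hx hS hM hbS hbM _ hab).1⟩

lemma exists_leader_reaches (j : Fin N) : ∃ k, IsLeader W k ∧ Reaches W k j := by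
  classical
  suffices H : ∀ n (j : Fin N), (Finset.univ.filter fun i => Reaches W i j).card ≤ n →
      ∃ k, IsLeader W k ∧ Reaches W k j by
    exact H _ j le_rfl
  intro n
  induction n with
  | zero =>
    intro j hj
    have hm : j ∈ Finset.univ.filter (fun i => Reaches W i j) :=
      Finset.mem_filter.2 ⟨Finset.mem_univ j, Relation.ReflTransGen.refl⟩
    rw [Finset.card_eq_zero.1 (Nat.le_zero.1 hj)] at hm
    exact absurd hm (Finset.notMem_empty j)
  | succ n ih =>
    intro j hj
    by_cases hL : IsLeader W j
    · exact ⟨j, hL, Relation.ReflTransGen.refl⟩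
    · simp only [IsLeader, not_forall] at hL
      obtain ⟨i, hij, hji⟩ := hL
      have hsub : (Finset.univ.filter fun a => Reaches W a i) ⊂
          (Finset.univ.filter fun a => Reaches W a j) := by
        constructor
        · intro a ha
          simp only [Finset.mem_filter, Finset.mem_univ, true_and] at ha ⊢
          exact ha.trans hij
        · intro hcon
          have : j ∈ (Finset.univ.filter fun a => Reaches W a i) :=
            hcon (Finset.mem_filter.2 ⟨Finset.mem_univ j, Relation.ReflTransGen.refl⟩)
          exact hji (Finset.mem_filter.1 this).2
      have hcard : (Finset.univ.filter fun a => Reaches W a i).card ≤ n := by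
        have := Finset.card_lt_card hsub
        omega
      obtain ⟨k, hk, hki⟩ := ih i hcard
      exact ⟨k, hk, hki.trans hij⟩

lemma csc_mem {k : Fin N} (hk : IsLeader W k) {j : Fin N} :
    j ∈ CSC W k ↔ Reaches W j k :=
  ⟨fun h => h.1, fun h => ⟨h, hk j h⟩⟩

lemma csc_closed {k : Fin N} (hk : IsLeader W k) :
    ∀ j ∈ CSC W k, ∀ l, W j l ≠ 0 → l ∈ CSC W k := by
  intro j hj l hl
  have h1 : Reaches W l j := Relation.ReflTransGen.single hl
  exact (csc_mem W hk).2 (h1.trans hj.1)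

lemma kernel_zero_of_unbalanced {x : Fin N → ℝ} (hx : (sLap W).mulVec x = 0)
    {k : Fin N} (hk : IsLeader W k)
    (hng : ¬ ∃ g : Fin N → ℝ, IsGauge W (CSC W k) g) :
    ∀ j ∈ CSC W k, x j = 0 := by
  obtain ⟨m, hmC, hmax⟩ := Set.exists_max_image (CSC W k) (fun j => |x j|) (Set.toFinite _)
    ⟨k, Relation.ReflTransGen.refl, Relation.ReflTransGen.refl⟩
  set M := |x m| with hMdef
  have hM : ∀ j ∈ CSC W k, |x j| ≤ M := hmax
  have hall : ∀ j ∈ CSC W k, |x j| = M := fun j hj =>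
    (reach_max W hx (csc_closed W hk) hM hmC rfl j (hj.1.trans hmC.2)).2
  by_cases hM0 : M = 0
  · intro j hj
    have := hall j hj
    rw [hM0] at this
    exact abs_eq_zero.1 this
  · exfalso
    apply hng
    have hMpos : 0 < M := lt_of_le_of_ne (abs_nonneg _) (Ne.symm hM0)
    refine ⟨fun j => x j / M, fun j hj => ?_, fun a ha b hb => ?_⟩
    · have h1 : |x j / M| = 1 := by
        rw [abs_div, hall j hj, abs_of_pos hMpos, div_self hM0]
      rcases abs_eq (zero_le_one) |>.1 h1 with h | h
      · exact Or.inl h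
      · exact Or.inr h
    · by_cases hW : W a b = 0
      · simp [hW]
      · have hp := prop_max W hx (csc_closed W hk) hM ha (hall a ha) b hW
        have hxa : x a * x a = M * M := by
          have h := hall a ha
          nlinarith [sq_abs (x a), abs_nonneg (x a)]
        have hM2 : M * M ≠ 0 := by positivity
        field_simp
        linear_combination x a * hp.2 + |W a b| * hxa
end Graph

section Graph2
variable {N : ℕ} (W : Matrix (Fin N) (Fin N) ℝ)

lemma kernel_gauge {x : Fin N → ℝ} (hx : (sLap W).mulVec x = 0)
    {k : Fin N} (hk : IsLeader W k) {g : Fin N → ℝ} (hg : IsGauge W (CSC W k) g) :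
    ∃ c : ℝ, ∀ j ∈ CSC W k, x j = g j * c := by
  classical
  set y : Fin N → ℝ := fun j => g j * x j with hy
  have hg2 : ∀ j ∈ CSC W k, g j * g j = 1 := by
    intro j hj; rcases hg.1 j hj with h | h <;> rw [h] <;> ring
  have hprop : ∀ j ∈ CSC W k, (∀ l ∈ CSC W k, y l ≤ y j) → ∀ l, W j l ≠ 0 → y l = y j := by
    intro j hj hmax l hWl
    have hrow := sLap_row W hx j
    have hrow2 : ∑ l, (|W j l| * y j - |W j l| * y l) = 0 := by
      calc ∑ l, (|W j l| * y j - |W j l| * y l)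
          = g j * ∑ l, (|W j l| * x j - W j l * x l) := by
            rw [Finset.mul_sum]
            refine Finset.sum_congr rfl fun l' _ => ?_
            by_cases hW' : W j l' = 0
            · simp [hW', hy]
            · have hl'C := csc_closed W hk j hj l' hW'
              have hgauge := hg.2 j hj l' hl'C
              have hg2l := hg2 l' hl'C
              simp only [hy]
              linear_combination x l' * g l' * hgauge - x l' * g j * W j l' * hg2l
        _ = 0 := by rw [hrow, mul_zero]
    have hnn : ∀ l ∈ Finset.univ, (0:ℝ) ≤ |W j l| * y j - |W j l| * y l := by
      intro l' _
      by_cases hW' : W j l' = 0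
      · simp [hW']
      · have hl'C := csc_closed W hk j hj l' hW'
        have := hmax l' hl'C
        nlinarith [abs_nonneg (W j l')]
    have hzero := (Finset.sum_eq_zero_iff_of_nonneg hnn).1 hrow2
    have h0 := hzero l (Finset.mem_univ l)
    have habsW : 0 < |W j l| := abs_pos.2 hWl
    nlinarith
  obtain ⟨m, hmC, hmax⟩ := Set.exists_max_image (CSC W k) y (Set.toFinite _)
    ⟨k, Relation.ReflTransGen.refl, Relation.ReflTransGen.refl⟩
  have hreach : ∀ i, Reaches W i m → y i = y m := by
    intro i hi
    induction hi using Relation.ReflTransGen.head_induction_on with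
    | refl => rfl
    | @head a c hac hcm ih =>
      have hcC : c ∈ CSC W k := (csc_mem W hk).2 (hcm.trans hmC.1)
      have hmaxc : ∀ l ∈ CSC W k, y l ≤ y c := fun l hl => ih ▸ hmax l hl
      exact (hprop c hcC hmaxc a hac).trans ih
  refine ⟨y m, fun j hj => ?_⟩
  have hyj : y j = y m := hreach j (hj.1.trans hmC.2)
  have := hg2 j hj
  calc x j = (g j * g j) * x j := by rw [this, one_mul]
    _ = g j * y j := by rw [hy]; ring
    _ = g j * y m := by rw [hyj]

lemma kernel_contain {x : Fin N → ℝ} (hx : (sLap W).mulVec x = 0) (l : Fin N) :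
    ∃ k, IsLeader W k ∧ |x l| ≤ |x k| := by
  obtain ⟨m, _, hmax⟩ := Finset.univ.exists_max_image (fun j => |x j|) ⟨l, Finset.mem_univ l⟩
  obtain ⟨k, hk, hkm⟩ := exists_leader_reaches W m
  have hr := reach_max W hx (S := Set.univ) (fun _ _ _ _ => Set.mem_univ _)
    (M := |x m|) (fun j _ => hmax j (Finset.mem_univ j)) (Set.mem_univ m) rfl k hkm
  exact ⟨k, hk, le_trans (hmax l (Finset.mem_univ l)) hr.2.ge⟩
end Graph2

section Analysis
open Filter Topology Real

lemma gain_of_ge {κ T t : ℝ} (h : T ≤ t) : gain κ T t = 0 := by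
  rw [gain, if_neg]; rintro ⟨_, h2⟩; linarith

lemma gain_of_mem {κ T t : ℝ} (h0 : 0 ≤ t) (h1 : t < T) : gain κ T t = κ / (T - t) := by
  rw [gain, if_pos ⟨h0, h1⟩]

lemma traj_const {N : ℕ} (W : Matrix (Fin N) (Fin N) ℝ)
    {κ ρ1 ρ2 T1 : ℝ} (hκ : 0 < κ) (hρ1 : 0 < ρ1) (hρ2 : 0 < ρ2) (hT1 : 0 < T1)
    {X : ℝ → Fin N → ℝ} (hXc : Continuous X)
    (hXd : ∀ t : ℝ, 0 ≤ t → t ≠ T1 →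
      HasDerivAt X ((-(ρ1 + ρ2 * gain κ T1 t)) • (sLap W).mulVec (X t)) t) :
    (sLap W).mulVec (X T1) = 0 ∧ ∀ t, T1 ≤ t → X t = X T1 := by
  set L := sLap W with hL
  have hXci : ∀ i, Continuous fun t => X t i := fun i => (continuous_apply i).comp hXc
  have hui : ∀ i, Continuous fun t => L.mulVec (X t) i := by
    intro i
    simp only [Matrix.mulVec, dotProduct]
    exact continuous_finset_sum _ fun j _ => continuous_const.mul (hXci j)
  -- Step 1 : L (X T1) = 0
  have hker : L.mulVec (X T1) = 0 := by
    by_contra hv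
    set v := L.mulVec (X T1) with hvdef
    set c := ∑ i, v i ^ 2 with hc
    have hcpos : 0 < c := by
      rcases Function.ne_iff.1 hv with ⟨i, hi⟩
      refine Finset.sum_pos' (fun j _ => sq_nonneg _) ⟨i, Finset.mem_univ i, ?_⟩
      have : v i ≠ 0 := by simpa using hi
      positivity
    set q : ℝ → ℝ := fun t => ∑ i, v i * L.mulVec (X t) i with hq
    have hqc : Continuous q :=
      continuous_finset_sum _ fun i _ => continuous_const.mul (hui i)
    have hqT1 : q T1 = c := by
      simp only [hq, hc, ← hvdef]
      exact Finset.sum_congr rfl fun i _ => (sq (v i)).symm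
    have h1 : ∀ᶠ t in 𝓝 T1, c / 2 < q t :=
      continuousAt_const.eventually_lt hqc.continuousAt (by rw [hqT1]; linarith)
    obtain ⟨δ, hδpos, hball⟩ := Metric.eventually_nhds_iff.1 h1
    set t0 : ℝ := max (T1 / 2) (T1 - δ / 2) with ht0
    have ht0pos : 0 < t0 := lt_of_lt_of_le (by linarith) (le_max_left _ _)
    have ht0lt : t0 < T1 := by
      apply max_lt <;> linarith
    have hqlow : ∀ s, t0 ≤ s → s ≤ T1 → c / 2 < q s := by
      intro s h1s h2s
      apply hball
      rw [Real.dist_eq, abs_of_nonpos (by linarith)]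
      have : T1 - δ / 2 ≤ s := le_trans (le_max_right _ _) h1s
      linarith
    set C : ℝ := ρ2 * κ * (c / 2) with hC
    have hCpos : 0 < C := by positivity
    set h : ℝ → ℝ := fun t => ∑ i, v i * X t i with hh
    have hhc : Continuous h := continuous_finset_sum _ fun i _ => continuous_const.mul (hXci i)
    have hhd : ∀ s, 0 ≤ s → s ≠ T1 →
        HasDerivAt h (-(ρ1 + ρ2 * gain κ T1 s) * q s) s := by
      intro s hs hsne
      have hco : ∀ i, HasDerivAt (fun t => X t i)
          (((-(ρ1 + ρ2 * gain κ T1 s)) • L.mulVec (X s)) i) s :=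
        fun i => hasDerivAt_pi.1 (hXd s hs hsne) i
      have hsum := HasDerivAt.fun_sum (fun i (_ : i ∈ Finset.univ) => (hco i).const_mul (v i))
      refine hsum.congr_deriv ?_
      rw [hq, Finset.mul_sum]
      exact Finset.sum_congr rfl fun i _ => by simp [Pi.smul_apply, smul_eq_mul]; ring
    set G : ℝ → ℝ := fun t => h t - C * Real.log (T1 - t) with hG
    have hGd : ∀ s, t0 < s → s < T1 →
        HasDerivAt G (-(ρ1 + ρ2 * gain κ T1 s) * q s + C / (T1 - s)) s := by
      intro s h1s h2s
      have hne : T1 - s ≠ 0 := by intro h'; linarith [sub_eq_zero.1 h']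
      have hlog : HasDerivAt (fun u : ℝ => Real.log (T1 - u)) (-1 / (T1 - s)) s :=
        ((hasDerivAt_id s).const_sub T1).log hne
      have := (hhd s (by linarith) (by intro h'; rw [h'] at h2s; exact lt_irrefl _ h2s)).sub
        (hlog.const_mul C)
      refine this.congr_deriv ?_
      ring
    have hGderiv_nonpos : ∀ s, t0 < s → s < T1 →
        -(ρ1 + ρ2 * gain κ T1 s) * q s + C / (T1 - s) ≤ 0 := by
      intro s h1s h2s
      have hTs : 0 < T1 - s := by linarith
      have hgain : gain κ T1 s = κ / (T1 - s) := gain_of_mem (by linarith) h2s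
      have hqs : c / 2 < q s := hqlow s h1s.le h2s.le
      have ha : ρ2 * κ / (T1 - s) ≤ ρ1 + ρ2 * gain κ T1 s := by
        rw [hgain]
        have : ρ2 * κ / (T1 - s) = ρ2 * (κ / (T1 - s)) := by ring
        rw [this]; linarith
      have hb : C / (T1 - s) = (ρ2 * κ / (T1 - s)) * (c / 2) := by
        rw [hC]; field_simp
      have hc2 : (0:ℝ) < ρ2 * κ / (T1 - s) := by positivity
      have := mul_le_mul ha hqs.le (by linarith) (le_trans hc2.le ha)
      rw [hb]; linarith
    -- antitone
    have hmono : ∀ t, t0 ≤ t → t < T1 → G t ≤ G t0 := by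
      intro t h1t h2t
      have hconv : Convex ℝ (Set.Icc t0 t) := convex_Icc _ _
      have hcont : ContinuousOn G (Set.Icc t0 t) := by
        apply ContinuousOn.sub (hhc.continuousOn)
        apply ContinuousOn.mul continuousOn_const
        intro s hs
        refine (Real.continuousAt_log ?_).comp
          ((continuous_const.sub continuous_id).continuousAt) |>.continuousWithinAt
        have := hs.2
        intro h'
        have : T1 - s = 0 := h'
        simp only [Set.mem_Icc] at hs
        linarith [hs.2]
      have hdiff : DifferentiableOn ℝ G (interior (Set.Icc t0 t)) := by
        rw [interior_Icc]
        intro s hs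
        exact ((hGd s hs.1 (lt_trans hs.2 h2t)).differentiableAt).differentiableWithinAt
      have hder : ∀ s ∈ interior (Set.Icc t0 t), deriv G s ≤ 0 := by
        rw [interior_Icc]
        intro s hs
        rw [(hGd s hs.1 (lt_trans hs.2 h2t)).deriv]
        exact hGderiv_nonpos s hs.1 (lt_trans hs.2 h2t)
      exact antitoneOn_of_deriv_nonpos hconv hcont hdiff hder
        (Set.left_mem_Icc.2 h1t) (Set.right_mem_Icc.2 h1t) h1t
    -- filter contradiction
    have hF : (𝓝[<] T1).NeBot := inferInstance
    have htend1 : Tendsto h (𝓝[<] T1) (𝓝 (h T1)) :=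
      (hhc.tendsto T1).mono_left nhdsWithin_le_nhds
    have htend0 : Tendsto (fun t => T1 - t) (𝓝[<] T1) (𝓝[>] 0) := by
      apply tendsto_nhdsWithin_of_tendsto_nhds_of_eventually_within
      · have : Tendsto (fun t : ℝ => T1 - t) (𝓝 T1) (𝓝 (T1 - T1)) :=
          (continuous_const.sub continuous_id).tendsto T1
        rw [sub_self] at this
        exact this.mono_left nhdsWithin_le_nhds
      · filter_upwards [self_mem_nhdsWithin] with t ht
        exact sub_pos.2 (Set.mem_Iio.1 ht)
    have htend2 : Tendsto (fun t => Real.log (T1 - t)) (𝓝[<] T1) atBot :=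
      Real.tendsto_log_nhdsGT_zero.comp htend0
    have htend3 : Tendsto (fun t => (h t0 - C * Real.log (T1 - t0)) + C * Real.log (T1 - t))
        (𝓝[<] T1) atBot :=
      tendsto_atBot_add_const_left _ _ (htend2.const_mul_atBot hCpos)
    have hev : ∀ᶠ t in 𝓝[<] T1, h t ≤ (h t0 - C * Real.log (T1 - t0)) + C * Real.log (T1 - t) := by
      have hmem : Set.Ioo t0 T1 ∈ 𝓝[<] T1 := Ioo_mem_nhdsLT_of_mem ⟨ht0lt, le_refl T1⟩
      filter_upwards [hmem] with t ht
      have := hmono t ht.1.le ht.2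
      simp only [hG] at this
      linarith
    have : Tendsto h (𝓝[<] T1) atBot := tendsto_atBot_mono' _ hev htend3
    exact not_tendsto_atBot_of_tendsto_nhds htend1 this
  -- Step 2: L (X t) = 0 for all t ≥ T1
  set B : ℝ := ∑ i, ∑ j, |L i j| with hB
  have hBnn : 0 ≤ B := Finset.sum_nonneg fun i _ => Finset.sum_nonneg fun j _ => abs_nonneg _
  set K : ℝ := 2 * ρ1 * B with hK
  set ψ : ℝ → ℝ := fun t => ∑ i, (L.mulVec (X t) i) ^ 2 with hψ
  have hψc : Continuous ψ := continuous_finset_sum _ fun i _ => (hui i).pow 2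
  have hψnn : ∀ t, 0 ≤ ψ t := fun t => Finset.sum_nonneg fun i _ => sq_nonneg _
  have hψT1 : ψ T1 = 0 := by
    simp only [hψ, hker, Pi.zero_apply]
    simp
  have hud : ∀ s, T1 < s → ∀ i, HasDerivAt (fun t => L.mulVec (X t) i)
      (-ρ1 * L.mulVec (L.mulVec (X s)) i) s := by
    intro s hs i
    have hgain : gain κ T1 s = 0 := gain_of_ge hs.le
    have hco : ∀ j, HasDerivAt (fun t => X t j)
        (((-(ρ1 + ρ2 * gain κ T1 s)) • L.mulVec (X s)) j) s :=
      fun j => hasDerivAt_pi.1 (hXd s (le_of_lt (lt_trans hT1 hs)) (ne_of_gt hs)) j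
    have hsum := HasDerivAt.fun_sum (fun j (_ : j ∈ Finset.univ) => (hco j).const_mul (L i j))
    have hfun : (fun t => L.mulVec (X t) i) = fun t => ∑ j, L i j * X t j := by
      funext t; rfl
    rw [hfun]
    refine hsum.congr_deriv ?_
    rw [hgain, show L.mulVec (L.mulVec (X s)) i = ∑ j, L i j * L.mulVec (X s) j from rfl,
      Finset.mul_sum]
    refine Finset.sum_congr rfl fun j _ => ?_
    simp only [Pi.smul_apply, smul_eq_mul]
    ring
  have hψd : ∀ s, T1 < s → HasDerivAt ψ
      (∑ i, 2 * L.mulVec (X s) i * (-ρ1 * L.mulVec (L.mulVec (X s)) i)) s := by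
    intro s hs
    have := HasDerivAt.fun_sum (fun i (_ : i ∈ Finset.univ) => (hud s hs i).pow 2)
    refine this.congr_deriv ?_
    refine Finset.sum_congr rfl fun i _ => ?_
    push_cast
    ring
  have hbound : ∀ s, T1 < s →
      (∑ i, 2 * L.mulVec (X s) i * (-ρ1 * L.mulVec (L.mulVec (X s)) i)) ≤ K * ψ s := by
    intro s hs
    set w : Fin N → ℝ := L.mulVec (X s) with hw
    have hterm : ∀ i j : Fin N, |L i j * w i * w j| ≤ |L i j| * ψ s := by
      intro i j
      have h1 : w i ^ 2 ≤ ψ s := by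
        simp only [hψ]
        exact Finset.single_le_sum (f := fun k => L.mulVec (X s) k ^ 2)
          (fun k _ => sq_nonneg _) (Finset.mem_univ i)
      have h2 : w j ^ 2 ≤ ψ s := by
        simp only [hψ]
        exact Finset.single_le_sum (f := fun k => L.mulVec (X s) k ^ 2)
          (fun k _ => sq_nonneg _) (Finset.mem_univ j)
      have h3 : |w i * w j| ≤ ψ s := by
        rw [abs_mul]
        nlinarith [abs_nonneg (w i), abs_nonneg (w j), sq_abs (w i), sq_abs (w j),
          sq_nonneg (|w i| - |w j|)]
      calc |L i j * w i * w j| = |L i j| * |w i * w j| := by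
            rw [mul_assoc, abs_mul]
        _ ≤ |L i j| * ψ s := mul_le_mul_of_nonneg_left h3 (abs_nonneg _)
    calc ∑ i, 2 * w i * (-ρ1 * L.mulVec w i)
        = ∑ i, ∑ j, -(2 * ρ1) * (L i j * w i * w j) := by
          refine Finset.sum_congr rfl fun i _ => ?_
          rw [show L.mulVec w i = ∑ j, L i j * w j from rfl]
          simp only [Finset.mul_sum]
          exact Finset.sum_congr rfl fun j _ => by ring
      _ ≤ ∑ i, ∑ j, |L i j| * (2 * ρ1 * ψ s) := by
          refine Finset.sum_le_sum fun i _ => Finset.sum_le_sum fun j _ => ?_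
          have h4 := hterm i j
          have h5 := neg_abs_le (L i j * w i * w j)
          nlinarith [abs_nonneg (L i j)]
      _ = K * ψ s := by
          simp only [← Finset.sum_mul]
          rw [hK, hB]
          ring
  have hu0 : ∀ t, T1 ≤ t → L.mulVec (X t) = 0 := by
    intro b hb
    rcases eq_or_lt_of_le hb with rfl | hb'
    · exact hker
    · have hψb : ψ b = 0 := by
        set gfun : ℝ → ℝ := fun t => Real.exp (-K * t) * ψ t with hgfun
        have hgd : ∀ s, T1 < s → HasDerivAt gfun
            (Real.exp (-K * s) * (-K) * ψ s + Real.exp (-K * s) *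
              (∑ i, 2 * L.mulVec (X s) i * (-ρ1 * L.mulVec (L.mulVec (X s)) i))) s := by
          intro s hs
          have he : HasDerivAt (fun t : ℝ => Real.exp (-K * t)) (Real.exp (-K * s) * (-K)) s := by
            simpa using ((hasDerivAt_id s).const_mul (-K)).exp
          exact he.mul (hψd s hs)
        have hKnn : 0 ≤ K := by positivity
        have hanti : AntitoneOn gfun (Set.Icc T1 b) := by
          apply antitoneOn_of_deriv_nonpos (convex_Icc _ _)
          · exact ((Real.continuous_exp.comp (continuous_const.mul continuous_id)).mul
              hψc).continuousOn
          · rw [interior_Icc]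
            intro s hsmem
            exact ((hgd s hsmem.1).differentiableAt).differentiableWithinAt
          · rw [interior_Icc]
            intro s hsmem
            rw [(hgd s hsmem.1).deriv]
            have h5 := hbound s hsmem.1
            have hexp : (0:ℝ) < Real.exp (-K * s) := Real.exp_pos _
            nlinarith [mul_le_mul_of_nonneg_left h5 hexp.le, hψnn s]
        have hgb : gfun b ≤ gfun T1 :=
          hanti (Set.left_mem_Icc.2 hb'.le) (Set.right_mem_Icc.2 hb'.le) hb'.le
        have hgT1 : gfun T1 = 0 := by
          simp only [hgfun, hψT1, mul_zero]
        have hexp : (0:ℝ) < Real.exp (-K * b) := Real.exp_pos _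
        have hgb' : Real.exp (-K * b) * ψ b ≤ 0 := by
          have h8 := hgb
          rw [hgT1] at h8
          exact h8
        have h9 := hψnn b
        nlinarith [hgb', hexp, h9]
      funext i
      have h6 := (Finset.sum_eq_zero_iff_of_nonneg
        (fun i (_ : i ∈ Finset.univ) => sq_nonneg (L.mulVec (X b) i))).1 hψb i (Finset.mem_univ i)
      simpa using (pow_eq_zero_iff (two_ne_zero (α := ℕ))).1 h6
  -- Step 3: X constant after T1
  refine ⟨hker, fun t ht => ?_⟩
  rcases eq_or_lt_of_le ht with rfl | ht'
  · rfl
  · funext i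
    have hconst : ∀ s, T1 < s → s ≤ t → X t i = X s i := by
      intro s hs hst
      have hcont : ContinuousOn (fun r => X r i) (Set.Icc s t) := (hXci i).continuousOn
      have hderiv : ∀ r ∈ Set.Ico s t, HasDerivWithinAt (fun r => X r i) 0 (Set.Ici r) r := by
        intro r hr
        have hrT : T1 < r := lt_of_lt_of_le hs hr.1
        have hD := hXd r (by linarith) (ne_of_gt hrT)
        rw [hu0 r hrT.le, smul_zero] at hD
        have h7 := hasDerivAt_pi.1 hD i
        simpa using h7.hasDerivWithinAt
      exact constant_of_has_deriv_right_zero hcont hderiv t (Set.right_mem_Icc.2 hst)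
    have htendX : Tendsto (fun s => X s i) (𝓝[>] T1) (𝓝 (X T1 i)) :=
      ((hXci i).tendsto T1).mono_left nhdsWithin_le_nhds
    have hev2 : (fun s => X s i) =ᶠ[𝓝[>] T1] fun _ => X t i := by
      filter_upwards [Ioo_mem_nhdsGT_of_mem ⟨le_refl T1, ht'⟩] with s hsmem
      exact (hconst s hsmem.1 hsmem.2.le).symm
    have htendX2 : Tendsto (fun s => X s i) (𝓝[>] T1) (𝓝 (X t i)) :=
      tendsto_const_nhds.congr' hev2.symm
    exact tendsto_nhds_unique htendX2 htendX

end Analysis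

theorem prescribed_time_bipartite_containment
    {N : ℕ} (hN : 2 ≤ N) (W : Matrix (Fin N) (Fin N) ℝ)
    (hdiag : ∀ k, W k k = 0)
    (hWC : WeaklyConnected W)
    (hbal : ∃ k0, IsLeader W k0 ∧ ∃ g : Fin N → ℝ, IsGauge W (CSC W k0) g)
    (κ ρ1 ρ2 T1 : ℝ) (hκ : 2 < κ) (hρ1 : 0 < ρ1) (hρ2 : 0 < ρ2) (hT1 : 0 < T1)
    (X : ℝ → Fin N → ℝ) (hX : NominalTraj W κ ρ1 ρ2 T1 X) :
    (∀ k, IsLeader W k → ∀ g : Fin N → ℝ, IsGauge W (CSC W k) g →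
      ∃ c : ℝ, ∀ j ∈ CSC W k, ∀ t : ℝ, T1 ≤ t → X t j = g j * c) ∧
    (∀ k, IsLeader W k → (¬ ∃ g : Fin N → ℝ, IsGauge W (CSC W k) g) →
      ∀ j ∈ CSC W k, ∀ t : ℝ, T1 ≤ t → X t j = 0) ∧
    (∀ l, ¬ IsLeader W l → ∀ t : ℝ, T1 ≤ t →
      ∃ k, IsLeader W k ∧ |X t l| ≤ |X t k|) := by
  obtain ⟨hXc, hXd⟩ := hX
  have hκ0 : 0 < κ := by linarith
  obtain ⟨hker, hconst⟩ := traj_const W hκ0 hρ1 hρ2 hT1 hXc hXd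
  refine ⟨?_, ?_, ?_⟩
  · intro k hk g hg
    obtain ⟨c, hc⟩ := kernel_gauge W hker hk hg
    exact ⟨c, fun j hj t ht => by rw [hconst t ht]; exact hc j hj⟩
  · intro k hk hng j hj t ht
    rw [hconst t ht]
    exact kernel_zero_of_unbalanced W hker hk hng j hj
  · intro l _ t ht
    obtain ⟨k, hk, hle⟩ := kernel_contain W hker l
    refine ⟨k, hk, ?_⟩
    rw [hconst t ht]
    exact hle
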